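/- Let (C, P, ∂) be a crossed module over a field K with ker ∂ finite (or C finite). The group algebra K[C], graded by setting L_p = span{e_c : ∂c = p}, with inner product ρ(e_c, e_{c'}) = 1 if c' = c⁻¹ and 0 otherwise, action φ_g(e_c) = e_{ᵍc}, and c̃ = e_c, is a crossed C-algebra; in particular the crossed P-algebra axioms φ_g(L_h) ⊆ L_{ghg⁻¹}, φ_g|_{L_g} = id, and φ_h(a)b = ba all hold. -/

import Mathlib

/-- A crossed module structure: a group `P` acting on a group `C` (via `ψ : P →* MulAut C`)
together with a homomorphism `δ : C →* P` satisfying equivariance and the Peiffer identity. -/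
structure IsCrossedModule {C P : Type*} [Group C] [Group P]
    (ψ : P →* MulAut C) (δ : C →* P) : Prop where
  equivariance : ∀ (p : P) (c : C), δ (ψ p c) = p * δ c * p⁻¹
  peiffer : ∀ (c c' : C), ψ (δ c) c' = c * c' * c⁻¹

/-- A crossed `P`-algebra over a field `K`: a `P`-graded associative unital `K`-algebra with a
nondegenerate symmetric inner product and a `P`-action, satisfying Turaev's axioms. -/
structure CrossedPAlgebra (K : Type*) [Field K] (P : Type*) [Group P]
    (L : Type*) [Ring L] [Algebra K L] where
  grading : P → Submodule K L
  grading_indep : iSupIndep grading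
  grading_supr : (⨆ p, grading p) = ⊤
  mul_mem : ∀ (g h : P), ∀ a ∈ grading g, ∀ b ∈ grading h, a * b ∈ grading (g * h)
  one_mem : (1 : L) ∈ grading 1
  ρ : L →ₗ[K] L →ₗ[K] K
  ρ_symm : ∀ a b : L, ρ a b = ρ b a
  ρ_graded : ∀ (g h : P), g * h ≠ 1 → ∀ a ∈ grading g, ∀ b ∈ grading h, ρ a b = 0
  ρ_nondeg : ∀ (g : P), ∀ a ∈ grading g, (∀ b ∈ grading g⁻¹, ρ a b = 0) → a = 0
  ρ_mul_assoc : ∀ a b c : L, ρ (a * b) c = ρ a (b * c)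
  φ : P →* (L ≃ₐ[K] L)
  φ_grading : ∀ (g h : P), ∀ a ∈ grading h, φ g a ∈ grading (g * h * g⁻¹)
  φ_ρ : ∀ (g : P) (a b : L), ρ (φ g a) (φ g b) = ρ a b
  φ_fix : ∀ (g : P), ∀ a ∈ grading g, φ g a = a
  φ_comm : ∀ (g h : P), ∀ a ∈ grading g, ∀ b ∈ grading h, (φ h) a * b = b * a

/-- A crossed `𝒞`-algebra over a crossed module `(C, P, δ)` (with action `ψ`): a crossed
`P`-algebra together with distinguished elements `c̃ ∈ L_{δ c}` for `c ∈ C`. -/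
structure CrossedAlgebra (K : Type*) [Field K] {C P : Type*} [Group C] [Group P]
    (ψ : P →* MulAut C) (δ : C →* P) (L : Type*) [Ring L] [Algebra K L]
    extends CrossedPAlgebra K P L where
  tilde : C → L
  tilde_mem : ∀ c : C, tilde c ∈ grading (δ c)
  tilde_one : tilde 1 = 1
  tilde_mul : ∀ c c' : C, tilde (c * c') = tilde c * tilde c'
  φ_tilde : ∀ (h : P) (c : C), φ h (tilde c) = tilde (ψ h c)

open scoped Classical


namespace GroupAlgebraCrossedAux

open scoped Pointwise

variable {K : Type*} [Field K] {C P : Type*} [Group C] [Group P]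
  {ψ : P →* MulAut C} {δ : C →* P}

/-- The bilinear form `ρ(f, g) = (f * g) 1`. -/
noncomputable def rho (K : Type*) [Field K] (C : Type*) [Group C] :
    (MonoidAlgebra K C) →ₗ[K] (MonoidAlgebra K C) →ₗ[K] K :=
  LinearMap.mk₂ K (fun f g => (f * g).coeff 1)
    (fun a a' b => by simp only [add_mul]; rfl)
    (fun k a b => by simp only [smul_mul_assoc]; rfl)
    (fun a b b' => by simp only [mul_add]; rfl)
    (fun k a b => by simp only [mul_smul_comm]; rfl)

@[simp] lemma ma_add_apply (f g : MonoidAlgebra K C) (c : C) : (f + g).coeff c = f.coeff c + g.coeff c := rfl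

@[simp] lemma ma_smul_apply (k : K) (f : MonoidAlgebra K C) (c : C) : (k • f).coeff c = k * f.coeff c := rfl

@[simp] lemma rho_apply (f g : MonoidAlgebra K C) : rho K C f g = (f * g).coeff 1 := rfl

/-- The `P`-action on the group algebra. -/
noncomputable def phi (ψ : P →* MulAut C) (K : Type*) [Field K] :
    P →* (MonoidAlgebra K C ≃ₐ[K] MonoidAlgebra K C) :=
  MonoidHom.mk' (fun g => MonoidAlgebra.domCongr K K (ψ g : C ≃* C)) (by
    intro g h
    ext f x
    simp [map_mul, AlgEquiv.mul_apply]
    rfl)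

@[simp] lemma phi_single (g : P) (c : C) (k : K) :
    phi ψ K g (MonoidAlgebra.single c k) = MonoidAlgebra.single (ψ g c) k :=
  MonoidAlgebra.domCongr_single (ψ g : C ≃* C) c k

lemma phi_apply_one (g : P) (f : MonoidAlgebra K C) : (phi ψ K g f).coeff 1 = f.coeff 1 := by
  show (MonoidAlgebra.domCongr K K (ψ g : C ≃* C) f).coeff 1 = f.coeff 1
  simp

lemma mul_apply_one_comm (f g : MonoidAlgebra K C) : (f * g).coeff 1 = (g * f).coeff 1 := by
  induction f using MonoidAlgebra.induction_linear with
  | zero => simp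
  | add a b ha hb => simp only [add_mul, mul_add, ma_add_apply, ha, hb]
  | single a k =>
    induction g using MonoidAlgebra.induction_linear with
    | zero => simp
    | add x y hx hy => simp only [add_mul, mul_add, ma_add_apply, hx, hy]
    | single b l =>
      rw [MonoidAlgebra.single_mul_single, MonoidAlgebra.single_mul_single]
      simp only [MonoidAlgebra.coeff_single, Finsupp.single_apply]
      by_cases h : a * b = 1
      · rw [if_pos h, if_pos (by rw [mul_eq_one_iff_inv_eq] at h ⊢; rw [← h]; simp), mul_comm]
      · rw [if_neg h, if_neg fun hc => h (by rw [mul_eq_one_iff_inv_eq] at hc ⊢; rw [← hc]; simp)]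

lemma supp_mul {g h : P} {a b : MonoidAlgebra K C}
    (ha : a ∈ MonoidAlgebra.supported K K {c : C | δ c = g})
    (hb : b ∈ MonoidAlgebra.supported K K {c : C | δ c = h}) :
    a * b ∈ MonoidAlgebra.supported K K {c : C | δ c = g * h} := by
  rw [MonoidAlgebra.mem_supported] at ha hb ⊢
  intro c hc
  have hc' : c ∈ a.coeff.support * b.coeff.support := MonoidAlgebra.support_coeff_mul_subset a b hc
  rw [Finset.mem_mul] at hc'
  obtain ⟨x, hx, y, hy, rfl⟩ := hc'
  have hxg : δ x = g := ha hx
  have hyh : δ y = h := hb hy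
  simp only [Set.mem_setOf_eq, map_mul, hxg, hyh]

lemma single_mem_supp {s : Set C} {c : C} (k : K) (h : c ∈ s) :
    MonoidAlgebra.single c k ∈ MonoidAlgebra.supported K K s := by
  rw [MonoidAlgebra.mem_supported, MonoidAlgebra.coeff_single]
  exact (Finsupp.mem_supported K _).1 (Finsupp.single_mem_supported K k h)

/-- The crossed `𝒞`-algebra structure on the group algebra. -/
noncomputable def theAlg (K : Type*) [Field K] {C P : Type*} [Group C] [Group P]
    {ψ : P →* MulAut C} {δ : C →* P} (hcm : IsCrossedModule ψ δ) :
    CrossedAlgebra K ψ δ (MonoidAlgebra K C) where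
  grading p := MonoidAlgebra.supported K K {c : C | δ c = p}
  grading_indep := by
    intro p
    refine Disjoint.mono_right ?_ (show Disjoint (MonoidAlgebra.supported K K {c : C | δ c = p})
      (MonoidAlgebra.supported K K {c : C | δ c ≠ p}) by
        rw [Submodule.disjoint_def]
        intro x h1 h2
        rw [MonoidAlgebra.mem_supported'] at h1 h2
        ext m
        by_cases hm : δ m = p
        · exact h2 m (fun h => h hm)
        · exact h1 m hm)
    exact iSup₂_le fun q hq => MonoidAlgebra.supported_mono fun c hc => by
      simp only [Set.mem_setOf_eq] at hc ⊢; rw [hc]; exact hq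
  grading_supr := by
    rw [eq_top_iff]
    rw [show (⊤ : Submodule K (MonoidAlgebra K C)) = MonoidAlgebra.supported K K Set.univ from
      (eq_top_iff.2 fun x _ => MonoidAlgebra.mem_supported.2 (Set.subset_univ _)).symm,
      MonoidAlgebra.supported_eq_span_single, Submodule.span_le]
    rintro _ ⟨c, -, rfl⟩
    exact Submodule.mem_iSup_of_mem (δ c) (single_mem_supp 1 rfl)
  mul_mem g h a ha b hb := supp_mul ha hb
  one_mem := by
    rw [MonoidAlgebra.one_def]
    exact single_mem_supp 1 (by simp)
  ρ := rho K C
  ρ_symm a b := mul_apply_one_comm a b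
  ρ_graded g h hgh a ha b hb := by
    simp only [rho_apply]
    by_contra h0
    have h1 : (1 : C) ∈ (a * b).coeff.support := Finsupp.mem_support_iff.2 h0
    have h2 := (MonoidAlgebra.mem_supported).1 (supp_mul ha hb) h1
    simp only [Set.mem_setOf_eq, map_one] at h2
    exact hgh h2.symm
  ρ_nondeg g a ha h0 := by
    ext c
    rw [MonoidAlgebra.coeff_zero, Finsupp.coe_zero, Pi.zero_apply]
    by_contra hc
    have hδ : δ c = g := (MonoidAlgebra.mem_supported).1 ha (Finsupp.mem_support_iff.2 hc)
    have hb : MonoidAlgebra.single c⁻¹ (1 : K) ∈ MonoidAlgebra.supported K K {x : C | δ x = g⁻¹} :=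
      single_mem_supp 1 (by simp [hδ])
    have h2 := h0 _ hb
    rw [rho_apply, MonoidAlgebra.coeff_mul_single_apply] at h2
    simp only [inv_inv, one_mul, mul_one] at h2
    exact hc h2
  ρ_mul_assoc a b c := by simp [mul_assoc]
  φ := phi ψ K
  φ_grading g h a ha := by
    rw [MonoidAlgebra.mem_supported] at ha ⊢
    intro c hc
    rw [show phi ψ K g a = MonoidAlgebra.domCongr K K (ψ g : C ≃* C) a from rfl,
      MonoidAlgebra.domCongr_support] at hc
    simp only [Finset.mem_coe, Finset.mem_map, MulEquiv.coe_toEquiv,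
      Equiv.coe_toEmbedding] at hc
    obtain ⟨d, hd, rfl⟩ := hc
    have hdh : δ d = h := ha hd
    simp only [Set.mem_setOf_eq, hcm.equivariance, hdh]
  φ_ρ g a b := by
    simp only [rho_apply, ← map_mul, phi_apply_one]
  φ_fix g a ha := by
    rw [MonoidAlgebra.supported_eq_span_single] at ha
    induction ha using Submodule.span_induction with
    | mem x hx =>
      obtain ⟨c, hc, rfl⟩ := hx
      simp only [Set.mem_setOf_eq] at hc
      beta_reduce
      rw [phi_single, ← hc, hcm.peiffer, mul_inv_cancel_right]
    | zero => simp
    | add x y hx hy ihx ihy => rw [map_add, ihx, ihy]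
    | smul r x hx ih => rw [map_smul, ih]
  φ_comm g h a ha b hb := by
    clear ha
    rw [MonoidAlgebra.supported_eq_span_single] at hb
    induction hb using Submodule.span_induction with
    | mem x hx =>
      obtain ⟨d, hd, rfl⟩ := hx
      simp only [Set.mem_setOf_eq] at hd
      show phi ψ K h a * MonoidAlgebra.single d 1 = MonoidAlgebra.single d 1 * a
      induction a using MonoidAlgebra.induction_linear with
      | zero => simp
      | add f f' hf hf' => rw [map_add, add_mul, mul_add, hf, hf']
      | single c k =>
        show phi ψ K h (MonoidAlgebra.single c k) * _ = _
        rw [phi_single, MonoidAlgebra.single_mul_single, MonoidAlgebra.single_mul_single,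
          ← hd, hcm.peiffer, inv_mul_cancel_right, mul_one, one_mul]
    | zero => simp
    | add x y hx hy ihx ihy => rw [mul_add, add_mul, ihx, ihy]
    | smul r x hx ih => rw [mul_smul_comm, smul_mul_assoc, ih]
  tilde c := MonoidAlgebra.single c 1
  tilde_mem c := single_mem_supp 1 rfl
  tilde_one := (MonoidAlgebra.one_def).symm
  tilde_mul c c' := by rw [MonoidAlgebra.single_mul_single, one_mul]
  φ_tilde h c := phi_single h c 1

end GroupAlgebraCrossedAux

/-- for a crossed module `(C, P, δ)` over a field `K` with `ker δ` finite, the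
group algebra `K[C]`, graded by `L_p = span{e_c : δ c = p}`, with inner product
`ρ(e_c, e_{c'}) = [c' = c⁻¹]`, action `φ_g(e_c) = e_{ᵍc}` and `c̃ = e_c`, is a crossed
`𝒞`-algebra (in particular all the crossed `P`-algebra axioms hold). -/
theorem groupAlgebra_top_crossedAlgebra {K : Type*} [Field K] {C P : Type*} [Group C] [Group P]
    {ψ : P →* MulAut C} {δ : C →* P} (hcm : IsCrossedModule ψ δ) [Finite δ.ker] :
    ∃ A : CrossedAlgebra K ψ δ (MonoidAlgebra K C),
      (∀ p : P, A.grading p =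
        Submodule.span K ((fun c => MonoidAlgebra.single c (1 : K)) '' {c : C | δ c = p})) ∧
      (∀ c c' : C, A.ρ (MonoidAlgebra.single c (1 : K)) (MonoidAlgebra.single c' (1 : K)) =
        if c' = c⁻¹ then 1 else 0) ∧
      (∀ (g : P) (c : C), A.φ g (MonoidAlgebra.single c (1 : K)) =
        MonoidAlgebra.single (ψ g c) (1 : K)) ∧
      (∀ c : C, A.tilde c = MonoidAlgebra.single c (1 : K)) := by
  refine ⟨GroupAlgebraCrossedAux.theAlg K hcm, fun p => MonoidAlgebra.supported_eq_span_single K _,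
    fun c c' => ?_, fun g c => GroupAlgebraCrossedAux.phi_single g c 1, fun c => rfl⟩
  show GroupAlgebraCrossedAux.rho K C (MonoidAlgebra.single c 1) (MonoidAlgebra.single c' 1) = _
  rw [GroupAlgebraCrossedAux.rho_apply, MonoidAlgebra.single_mul_single, one_mul,
    MonoidAlgebra.coeff_single, Finsupp.single_apply]
  by_cases hcc : c' = c⁻¹
  · rw [if_pos hcc, if_pos (by rw [hcc, mul_inv_cancel])]
  · rw [if_neg hcc, if_neg fun hc => hcc (inv_eq_of_mul_eq_one_right hc).symm]
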